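/- If f is a differentiable function on an open set X ⊆ ℝⁿ such that every stationary point is a global minimizer, then f is invex with the explicit kernel η(x,y) = 0 if ∇f(x) = 0, and η(x,y) = (f(y) - f(x)) ∇f(x) / ‖∇f(x)‖² otherwise; that is, this η satisfies f(y) - f(x) ≥ ⟨∇f(x), η(x,y)⟩ for all x, y ∈ X. -/

import Mathlib

open RealInnerProductSpace
open scoped Classical

/-- Explicit kernel construction: if every stationary point is a global minimizer,
then `η(x,y) = 0` if `∇f(x) = 0` and `η(x,y) = ((f y - f x)/‖∇f x‖²) • ∇f x` otherwise
is a kernel witnessing invexity. -/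
theorem invex_explicit_kernel {n : ℕ}
    (X : Set (EuclideanSpace ℝ (Fin n))) (hX : IsOpen X) (hXne : X.Nonempty)
    (f : EuclideanSpace ℝ (Fin n) → ℝ)
    (hf : ∀ x ∈ X, DifferentiableAt ℝ f x)
    (hmin : ∀ x ∈ X, gradient f x = 0 → ∀ y ∈ X, f x ≤ f y) :
    ∀ x ∈ X, ∀ y ∈ X, f y - f x ≥
      ⟪gradient f x,
        if gradient f x = 0 then (0 : EuclideanSpace ℝ (Fin n))
        else ((f y - f x) / ‖gradient f x‖ ^ 2) • gradient f x⟫ := by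
  intro x hx y hy
  by_cases h : gradient f x = 0
  · simp [h]
    linarith [hmin x hx h y hy]
  · rw [if_neg h, real_inner_smul_right, real_inner_self_eq_norm_sq]
    have hn : ‖gradient f x‖ ^ 2 ≠ 0 := by
      exact pow_ne_zero _ (norm_ne_zero_iff.mpr h)
    field_simp
    exact le_refl _
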